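/- Let (V_N) be a universal system, let N ≥ 2, and let V be a subobject of V_N. If the unipotency of V is strictly less than N, then V is contained in the subobject V_{N−1} of V_N (i.e., the monomorphism V → V_N factors through ι_N : V_{N−1} → V_N). -/

import Mathlib

/-!
Formalization of results from the appendix "Universal objects of unipotent Tannakian
categories" of K. Sakugawa, "On the infinite Frobenius action on de Rham fundamental
groups of affine curves".

Setting: `K` is a field of characteristic zero, `C` is a `K`-linear abelian category
with a fixed object `e` (the unit object `𝟙` of the unipotent neutral Tannakian
category; only the `K`-linear abelian structure is used), whose endomorphism ring is
`K` (expressed by the hypothesis that `c ↦ c • 𝟙 e` is a bijection `K → End e`).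
-/

open CategoryTheory CategoryTheory.Limits CategoryTheory.Abelian

attribute [local instance] CategoryTheory.Abelian.hasFiniteBiproducts

universe w v u

section Preliminaries

variable {C : Type u} [Category.{v} C] [Abelian C]

/-- `UnipLE e n V` : the object `V` admits a chain of subobjects
`0 = V₀ ⊆ V₁ ⊆ ⋯ ⊆ Vₙ = V` of length `≤ n` whose graded pieces are isomorphic to
finite direct sums of copies of the object `e`, i.e. `V` is unipotent of
unipotency `≤ n` (with respect to the unit object `e`). -/
inductive UnipLE (e : C) : ℕ → C → Prop
  | zero (V : C) (h : IsZero V) : UnipLE e 0 V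
  | step {n : ℕ} {V : C} (W : C) (i : W ⟶ V) (hi : Mono i) (r : ℕ)
      (hW : UnipLE e n W) (h : Nonempty (cokernel i ≅ ⨁ fun _ : Fin r => e)) :
      UnipLE e (n + 1) V

/-- The unipotency of an object: the minimal length of a unipotent filtration. -/
noncomputable def unipotency (e : C) (V : C) : ℕ := sInf {n | UnipLE e n V}

variable (K : Type*) [Field K] [CharZero K] [Linear K C]

section Ext

variable [HasExt.{w} C]

/-- For a `K`-linear abelian category `C`, the Ext-groups are `K`-vector spaces,
with scalar multiplication given by composition with `c • 𝟙`. -/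
noncomputable instance extModule (X Y : C) (n : ℕ) : Module K (Abelian.Ext X Y n) where
  smul c α := (Abelian.Ext.mk₀ (c • 𝟙 X)).comp α (zero_add n)
  one_smul α := by
    show (Abelian.Ext.mk₀ ((1 : K) • 𝟙 X)).comp α (zero_add n) = α
    rw [one_smul, Abelian.Ext.mk₀_id_comp]
  mul_smul c c' α := by
    show (Abelian.Ext.mk₀ ((c * c') • 𝟙 X)).comp α (zero_add n) =
      (Abelian.Ext.mk₀ (c • 𝟙 X)).comp
        ((Abelian.Ext.mk₀ (c' • 𝟙 X)).comp α (zero_add n)) (zero_add n)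
    rw [Abelian.Ext.mk₀_comp_mk₀_assoc,
      show (c • 𝟙 X) ≫ (c' • 𝟙 X) = (c * c') • 𝟙 X by
        rw [CategoryTheory.Linear.smul_comp, Category.id_comp, smul_smul]]
  smul_zero c := by
    show (Abelian.Ext.mk₀ (c • 𝟙 X)).comp (0 : Abelian.Ext X Y n) (zero_add n) = 0
    apply Abelian.Ext.comp_zero
  smul_add c α β := by
    show (Abelian.Ext.mk₀ (c • 𝟙 X)).comp (α + β) (zero_add n) = _
    rw [Abelian.Ext.comp_add]
    rfl
  add_smul c c' α := by
    show (Abelian.Ext.mk₀ ((c + c') • 𝟙 X)).comp α (zero_add n) = _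
    rw [add_smul,
      show (Abelian.Ext.mk₀ (c • 𝟙 X + c' • 𝟙 X) : Abelian.Ext X X 0)
          = Abelian.Ext.mk₀ (c • 𝟙 X) + Abelian.Ext.mk₀ (c' • 𝟙 X) by
        letI := HasDerivedCategory.standard C
        ext
        rw [Abelian.Ext.add_hom, Abelian.Ext.mk₀_hom, Abelian.Ext.mk₀_hom,
          Abelian.Ext.mk₀_hom, Functor.map_add]
        simp [ShiftedHom.mk₀, Preadditive.add_comp],
      Abelian.Ext.add_comp]
    rfl
  zero_smul α := by
    show (Abelian.Ext.mk₀ ((0 : K) • 𝟙 X)).comp α (zero_add n) = 0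
    rw [zero_smul, Abelian.Ext.mk₀_zero, Abelian.Ext.zero_comp]

/-- A *universal system* for the unit object `e`: an inductive system
`V 1 → V 2 → ⋯` in `C` with `V 1 = e` together with, for every `N ≥ 1`, a short exact
sequence `0 → V N → V (N+1) → Ext¹(e, V N) ⊗ e → 0` whose connecting homomorphism
`Ext¹(e, V N) = Hom(e, Ext¹(e, V N) ⊗ e) → Ext¹(e, V N)` (obtained by applying
`Hom(e, -)` to the sequence) is the identity map, the `K`-vector spaces
`Ext¹(e, V N)` being finite-dimensional.

Here the object `T N` plays the role of `Ext¹(e, V N) ⊗ e`: it is equipped with a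
`K`-linear map `coev N : Ext¹(e, V N) →ₗ[K] (e ⟶ T N)` inducing the natural
isomorphism `Hom(T N, W) ≅ Hom_K(Ext¹(e, V N), Hom(e, W))` for every `W` (the field
`tensor_unit`), so that `Hom(e, T N) ≅ Ext¹(e, V N)`.  The identification of the
connecting homomorphism with the identity is the field `connecting`: the pullback of
the `N`-th short exact sequence along the morphism `coev N x : e ⟶ T N` represents
the extension class `x ∈ Ext¹(e, V N)`, i.e. `(mk₀ (coev N x)) ∘ extClass = x`.

(Indexing: the layer `V N` here is the paper's `V_N`, `N ≥ 1`; the paper's short exact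
sequence `0 → V_{N-1} → V_N → Ext¹(𝟙, V_{N-1}) ⊗ 𝟙 → 0` for `N ≥ 2` is the sequence
indexed below by `N - 1 ≥ 1`.) -/
structure UniversalSystem (e : C) where
  V : ℕ → C
  V_one : V 1 = e
  fd : ∀ N, 1 ≤ N → FiniteDimensional K (Abelian.Ext e (V N) 1)
  T : ℕ → C
  coev : ∀ N, Abelian.Ext e (V N) 1 →ₗ[K] (e ⟶ T N)
  tensor_unit : ∀ N, 1 ≤ N → ∀ W : C,
    Function.Bijective fun g : T N ⟶ W =>
      (CategoryTheory.Linear.rightComp K e g).comp (coev N)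
  ι : ∀ N, V N ⟶ V (N + 1)
  π : ∀ N, V (N + 1) ⟶ T N
  zero : ∀ N, ι N ≫ π N = 0
  shortExact : ∀ N, 1 ≤ N → (ShortComplex.mk (ι N) (π N) (zero N)).ShortExact
  connecting : ∀ N (hN : 1 ≤ N) (x : Abelian.Ext e (V N) 1),
    (Abelian.Ext.mk₀ (coev N x)).comp (shortExact N hN).extClass (zero_add 1) = x

end Ext

end Preliminaries


/-! ### Auxiliary results: naturality of the Ext-class of a short exact sequence -/

section Naturality

open CategoryTheory.Category CategoryTheory.Pretriangulated

variable {C : Type u} [Category.{v} C] [Abelian C]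

namespace CochainComplex.mappingCone

lemma map_descShortComplex' {S₁ S₂ : ShortComplex (CochainComplex C ℤ)} (ψ : S₁ ⟶ S₂) :
    map S₁.f S₂.f ψ.τ₁ ψ.τ₂ ψ.comm₁₂.symm ≫ descShortComplex S₂ =
      descShortComplex S₁ ≫ ψ.τ₃ := by
  ext n
  have h23 := HomologicalComplex.congr_hom ψ.comm₂₃ n
  simp only [HomologicalComplex.comp_f] at h23
  simp [ext_from_iff _ (n + 1) n rfl, map, descShortComplex,
    HomologicalComplex.comp_f, h23]

end CochainComplex.mappingCone

namespace DerivedCategory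

lemma triangleOfSESδ_naturality' [HasDerivedCategory.{w} C]
    {S₁ S₂ : ShortComplex (CochainComplex C ℤ)} (hS₁ : S₁.ShortExact) (hS₂ : S₂.ShortExact)
    (ψ : S₁ ⟶ S₂) :
    triangleOfSESδ hS₁ ≫ (Q.map ψ.τ₁)⟦(1 : ℤ)⟧' = Q.map ψ.τ₃ ≫ triangleOfSESδ hS₂ := by
  haveI := CochainComplex.mappingCone.quasiIso_descShortComplex hS₁
  haveI := CochainComplex.mappingCone.quasiIso_descShortComplex hS₂
  dsimp only [triangleOfSESδ]
  have comm₃ := (CochainComplex.mappingCone.triangleMap S₁.f S₂.f ψ.τ₁ ψ.τ₂ ψ.comm₁₂.symm).comm₃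
  dsimp only [CochainComplex.mappingCone.triangleMap] at comm₃
  have hdesc := CochainComplex.mappingCone.map_descShortComplex' ψ
  have hnat := (Q.commShiftIso (1 : ℤ)).hom.naturality ψ.τ₁
  dsimp only [Functor.comp_map] at hnat
  have key : Q.map (CochainComplex.mappingCone.map S₁.f S₂.f ψ.τ₁ ψ.τ₂ ψ.comm₁₂.symm) =
      Q.map (CochainComplex.mappingCone.descShortComplex S₁) ≫ Q.map ψ.τ₃ ≫
        inv (Q.map (CochainComplex.mappingCone.descShortComplex S₂)) := by
    rw [← cancel_mono (Q.map (CochainComplex.mappingCone.descShortComplex S₂)), assoc, assoc,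
      IsIso.inv_hom_id, comp_id, ← Q.map_comp, hdesc, Q.map_comp]
  exact triangleOfSESδ_naturality hS₁ hS₂ ψ

end DerivedCategory

namespace CategoryTheory.ShortComplex.ShortExact

lemma singleδ_naturality' [HasDerivedCategory.{w} C] {S₁ S₂ : ShortComplex C}
    (hS₁ : S₁.ShortExact) (hS₂ : S₂.ShortExact) (φ : S₁ ⟶ S₂) :
    hS₁.singleδ ≫ ((DerivedCategory.singleFunctor C 0).map φ.τ₁)⟦(1 : ℤ)⟧' =
      (DerivedCategory.singleFunctor C 0).map φ.τ₃ ≫ hS₂.singleδ := by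
  have hδ := DerivedCategory.triangleOfSESδ_naturality'
    (hS₁.map_of_exact (HomologicalComplex.single C (ComplexShape.up ℤ) 0))
    (hS₂.map_of_exact (HomologicalComplex.single C (ComplexShape.up ℤ) 0))
    ((HomologicalComplex.single C (ComplexShape.up ℤ) 0).mapShortComplex.map φ)
  dsimp only [singleδ]
  have hinv := (((SingleFunctors.evaluation _ _ 0).mapIso
    (DerivedCategory.singleFunctorsPostcompQIso C)).inv).naturality φ.τ₁
  have hhom := (((SingleFunctors.evaluation _ _ 0).mapIso
    (DerivedCategory.singleFunctorsPostcompQIso C)).hom).naturality φ.τ₃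
  dsimp only [SingleFunctors.evaluation, SingleFunctors.postcomp, Functor.comp_map,
    Functor.mapIso_inv, Functor.mapIso_hom] at hinv hhom ⊢
  dsimp only [CochainComplex.singleFunctors, DerivedCategory.singleFunctor] at hinv hhom ⊢
  dsimp only [Functor.mapShortComplex] at hδ
  exact (singleTriangle.map hS₁ hS₂ φ).comm₃

lemma extClass_naturality' [HasExt.{w} C] {S₁ S₂ : ShortComplex C}
    (hS₁ : S₁.ShortExact) (hS₂ : S₂.ShortExact) (φ : S₁ ⟶ S₂) :
    hS₁.extClass.comp (Abelian.Ext.mk₀ φ.τ₁) (add_zero 1) =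
      (Abelian.Ext.mk₀ φ.τ₃).comp hS₂.extClass (zero_add 1) := by
  letI := HasDerivedCategory.standard C
  apply Abelian.Ext.ext
  rw [Abelian.Ext.comp_hom, Abelian.Ext.comp_hom, Abelian.Ext.mk₀_hom, Abelian.Ext.mk₀_hom,
    extClass_hom, extClass_hom, ShiftedHom.comp_mk₀, ShiftedHom.mk₀_comp]
  exact singleδ_naturality' hS₁ hS₂ φ

end CategoryTheory.ShortComplex.ShortExact

end Naturality

/-! ### Auxiliary results about universal systems -/

section MainAux

variable {K : Type*} [Field K]
variable {C : Type u} [Category.{v} C] [Abelian C] [CategoryTheory.Linear K C] [HasExt.{w} C]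
variable (e : C)

/-- The coevaluation map of a universal system is surjective. -/
lemma UniversalSystem.coev_surjective
    (hEnd : Function.Surjective fun c : K => c • 𝟙 e)
    (S : UniversalSystem K e) (k : ℕ) (hk : 1 ≤ k) :
    Function.Surjective (S.coev k) := by
  haveI := S.fd k hk
  set b := Module.finBasis K (Abelian.Ext e (S.V k) 1) with hb
  have hg : ∀ i, ∃ g : S.T k ⟶ e, ∀ x, S.coev k x ≫ g = b.coord i x • 𝟙 e := by
    intro i
    obtain ⟨g, hgi⟩ := (S.tensor_unit k hk e).2 ((b.coord i).smulRight (𝟙 e))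
    refine ⟨g, fun x => ?_⟩
    have := LinearMap.congr_fun hgi x
    simpa [CategoryTheory.Linear.rightComp] using this
  choose g hg using hg
  have hu : ∑ i, (g i ≫ S.coev k (b i)) = 𝟙 (S.T k) := by
    apply (S.tensor_unit k hk (S.T k)).1
    refine LinearMap.ext fun x => ?_
    simp only [LinearMap.coe_comp, Function.comp_apply, Linear.rightComp_apply,
      Preadditive.comp_sum, Category.comp_id]
    calc ∑ i, S.coev k x ≫ g i ≫ S.coev k (b i)
        = ∑ i, b.coord i x • S.coev k (b i) := by
          refine Finset.sum_congr rfl fun i _ => ?_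
          rw [← Category.assoc, hg i x, CategoryTheory.Linear.smul_comp, Category.id_comp]
      _ = S.coev k (∑ i, b.coord i x • b i) := by
          rw [map_sum]
          exact Finset.sum_congr rfl fun i _ => (map_smul _ _ _).symm
      _ = S.coev k x := by
          congr 1
          simpa only [Module.Basis.coord_apply] using b.sum_repr x
  intro h
  choose c hc using fun i => hEnd (h ≫ g i)
  refine ⟨∑ i, c i • b i, ?_⟩
  rw [map_sum]
  calc ∑ i, S.coev k (c i • b i)
      = ∑ i, (h ≫ g i) ≫ S.coev k (b i) := by
        refine Finset.sum_congr rfl fun i _ => ?_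
        rw [map_smul, ← hc i, CategoryTheory.Linear.smul_comp, Category.id_comp]
    _ = h ≫ ∑ i, (g i ≫ S.coev k (b i)) := by
        rw [Preadditive.comp_sum]
        exact Finset.sum_congr rfl fun i _ => Category.assoc _ _ _
    _ = h := by rw [hu, Category.comp_id]

/-- Pushing forward an `Ext¹`-class from `e` along the transition morphism of a
universal system kills it. -/
lemma UniversalSystem.ext_comp_ι_eq_zero (S : UniversalSystem K e) (k : ℕ) (hk : 1 ≤ k)
    (γ : Abelian.Ext e (S.V k) 1) :
    γ.comp (Abelian.Ext.mk₀ (S.ι k)) (add_zero 1) = 0 := by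
  have h := (S.shortExact k hk).extClass_comp
  dsimp only at h
  conv_lhs => rw [← S.connecting k hk γ]
  rw [Abelian.Ext.comp_assoc_of_third_deg_zero, h, Abelian.Ext.comp_zero]

/-- **Main induction**: any morphism from an object of unipotency `≤ n` to `V (n+1)`
factors through `ι n : V n ⟶ V (n+1)`. -/
lemma UniversalSystem.factor_through
    (hEnd : Function.Surjective fun c : K => c • 𝟙 e)
    (S : UniversalSystem K e) {ℓ : ℕ} {V : C} (hV : UnipLE e ℓ V) :
    ∀ n, 1 ≤ n → ℓ ≤ n → ∀ φ : V ⟶ S.V (n + 1), ∃ g : V ⟶ S.V n, g ≫ S.ι n = φ := by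
  induction hV with
  | zero V h =>
    intro n hn _ φ
    exact ⟨0, by rw [zero_comp]; exact (h.eq_of_src 0 φ)⟩
  | @step ℓ V W w hw r hW hco ih =>
    intro n hn hℓn φ
    obtain ⟨iso⟩ := hco
    obtain ⟨g₁, hg₁⟩ := ih n hn (by omega) (w ≫ φ)
    have hwθ : w ≫ (φ ≫ S.π n) = 0 := by
      rw [← Category.assoc, ← hg₁, Category.assoc, S.zero n, comp_zero]
    set θb : cokernel w ⟶ S.T n := cokernel.desc w (φ ≫ S.π n) hwθ with hθb
    haveI : Mono w := hw
    have hSW : (ShortComplex.mk w (cokernel.π w) (cokernel.condition w)).ShortExact :=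
      { exact := ShortComplex.exact_of_g_is_cokernel _ (cokernelIsCokernel w) }
    have hnat := CategoryTheory.ShortComplex.ShortExact.extClass_naturality' hSW
      (S.shortExact n hn)
      ⟨g₁, φ, θb, hg₁, (cokernel.π_desc w (φ ≫ S.π n) hwθ).symm⟩
    dsimp only at hnat
    have hβ : ∀ β : Abelian.Ext e W 1, β.comp (Abelian.Ext.mk₀ g₁) (add_zero 1) = 0 := by
      obtain ⟨k, rfl⟩ : ∃ k, n = k + 1 := ⟨n - 1, by omega⟩
      intro β
      by_cases hk : 1 ≤ k
      · obtain ⟨g₂, hg₂⟩ := ih k hk (by omega) g₁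
        rw [← hg₂, ← Abelian.Ext.mk₀_comp_mk₀, ← Abelian.Ext.comp_assoc_of_third_deg_zero]
        exact UniversalSystem.ext_comp_ι_eq_zero e S k hk _
      · have hl : ℓ = 0 := by omega
        subst hl
        have hzW : IsZero W := by cases hW with | zero _ h => exact h
        have hβ0 : β = 0 := by
          rw [← Abelian.Ext.comp_mk₀_id β, hzW.eq_of_src (𝟙 W) 0, Abelian.Ext.mk₀_zero,
            Abelian.Ext.comp_zero]
        rw [hβ0, Abelian.Ext.zero_comp]
    have hθ0 : θb = 0 := by
      have hcomp : iso.inv ≫ θb = 0 := by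
        apply biproduct.hom_ext'
        intro i
        rw [comp_zero, ← Category.assoc]
        obtain ⟨x, hx⟩ := UniversalSystem.coev_surjective e hEnd S n hn
          ((biproduct.ι (fun _ : Fin r => e) i ≫ iso.inv) ≫ θb)
        have hcon := S.connecting n hn x
        rw [hx] at hcon
        have hx0 : x = 0 := by
          rw [← hcon, ← Abelian.Ext.mk₀_comp_mk₀_assoc, ← hnat,
            ← Abelian.Ext.comp_assoc (Abelian.Ext.mk₀
                (biproduct.ι (fun _ : Fin r => e) i ≫ iso.inv))
              hSW.extClass (Abelian.Ext.mk₀ g₁) (zero_add 1) (add_zero 1) (by omega)]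
          exact hβ _
        rw [← hx, hx0, map_zero]
      rw [← Iso.hom_inv_id_assoc iso θb, hcomp, comp_zero]
    have hφπ : φ ≫ S.π n = 0 := by
      rw [← cokernel.π_desc w (φ ≫ S.π n) hwθ, ← hθb, hθ0, comp_zero]
    haveI : Mono ((ShortComplex.mk (S.ι n) (S.π n) (S.zero n)).f) := (S.shortExact n hn).mono_f
    exact (S.shortExact n hn).exact.lift' φ hφπ

end MainAux

/-- **Lemma A.6 (Lemma `lema1`).**
Let `(V_N)` be a universal system, `N ≥ 2` (here `N = n + 1` with `n ≥ 1`), and let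
`V` be a subobject of `V_N` (given by a monomorphism `m : V ⟶ V (n+1)`).  If the
unipotency of `V` is strictly less than `N`, then `V` is a subobject of
`V_{N-1} = V n`, i.e. the monomorphism `m` factors through `ι n : V n ⟶ V (n+1)`. -/
theorem statement2
    {K : Type*} [Field K] [CharZero K]
    {C : Type u} [Category.{v} C] [Abelian C] [CategoryTheory.Linear K C] [HasExt.{w} C]
    (e : C)
    (hEnd : Function.Bijective fun c : K => c • 𝟙 e)
    (hUnip : ∀ V : C, ∃ n, UnipLE e n V)
    (S : UniversalSystem K e)
    (n : ℕ) (hn : 1 ≤ n)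
    (V : C) (m : V ⟶ S.V (n + 1)) (hm : Mono m)
    (hV : unipotency e V < n + 1) :
    ∃ g : V ⟶ S.V n, g ≫ S.ι n = m := by
  have hmem : UnipLE e (unipotency e V) V := Nat.sInf_mem (hUnip V)
  exact UniversalSystem.factor_through e hEnd.2 S hmem n hn (Nat.lt_succ_iff.mp hV) m
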